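/- Under the stated biorthogonality assumptions, the coarse matrix A_H = Y^* A Z equals diag(λ_1,…,λ_r) and is invertible, and the shifted deflation preconditioner Q satisfies A Q z_i = μ z_i for i = 1,…,r and A Q z_j = λ_j z_j for j = r+1,…,N. Hence the spectrum of A Q is {μ} ∪ {λ_{r+1},…,λ_N}: the r deflated eigenvalues of A are shifted to μ while the remaining N − r eigenvalues are untouched. -/

import Mathlib

open Matrix

/-- Shifted eigenvector deflation: A_H = diag(λ_1,…,λ_r) is invertible, A Q shifts
    the r deflated eigenvalues to μ and leaves the remaining ones untouched, so that
    σ(A Q) = {μ} ∪ {λ_{r+1},…,λ_N}. -/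
theorem stmt_14 (N r : ℕ) (hr1 : 1 ≤ r) (hrN : r < N)
    (A : Matrix (Fin N) (Fin N) ℂ)
    (z : Fin N → (Fin N → ℂ)) (lam : Fin N → ℂ)
    (heig : ∀ j, A *ᵥ z j = lam j • z j)
    (hbasis : LinearIndependent ℂ z)
    (hne : ∀ i : Fin N, (i:ℕ) < r → lam i ≠ 0)
    (y : Fin r → (Fin N → ℂ))
    (hbi : ∀ (i : Fin r) (j : Fin N),
      star (y i) ⬝ᵥ z j = if (i:ℕ) = (j:ℕ) then 1 else 0)
    (Z Y : Matrix (Fin N) (Fin r) ℂ)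
    (hZ : ∀ (k : Fin N) (i : Fin r), Z k i = z (Fin.castLE (le_of_lt hrN) i) k)
    (hY : ∀ (k : Fin N) (i : Fin r), Y k i = y i k)
    (AH : Matrix (Fin r) (Fin r) ℂ) (hAH : AH = Yᴴ * A * Z)
    (μ : ℂ)
    (Q : Matrix (Fin N) (Fin N) ℂ)
    (hQ : Q = 1 - Z * AH⁻¹ * Yᴴ * A + μ • (Z * AH⁻¹ * Yᴴ)) :
    AH = Matrix.diagonal (fun i : Fin r => lam (Fin.castLE (le_of_lt hrN) i)) ∧
    IsUnit AH ∧
    (∀ i : Fin N, (i:ℕ) < r → (A * Q) *ᵥ z i = μ • z i) ∧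
    (∀ j : Fin N, r ≤ (j:ℕ) → (A * Q) *ᵥ z j = lam j • z j) ∧
    spectrum ℂ (A * Q) = {μ} ∪ {x : ℂ | ∃ j : Fin N, r ≤ (j:ℕ) ∧ lam j = x} := by
  set d : Fin r → ℂ := fun i => lam (Fin.castLE (le_of_lt hrN) i) with hd
  -- action of Yᴴ on the eigenvectors
  have hYz : ∀ j : Fin N, Yᴴ *ᵥ z j = fun i : Fin r => if (i:ℕ) = (j:ℕ) then 1 else 0 := by
    intro j; funext i
    rw [← hbi i j]
    simp [mulVec, dotProduct, conjTranspose_apply, hY]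
  -- A·Z = Z·D
  have hAZ : A * Z = Z * Matrix.diagonal d := by
    ext k j
    have hcol : (A * Z) k j = (A *ᵥ z (Fin.castLE (le_of_lt hrN) j)) k := by
      simp [mul_apply, mulVec, dotProduct, hZ]
    rw [mul_diagonal, hcol, heig]
    simp [hZ, hd, mul_comm]
  -- Yᴴ·Z = 1
  have hYZ : Yᴴ * Z = 1 := by
    ext i j
    have : (Yᴴ * Z) i j = (Yᴴ *ᵥ z (Fin.castLE (le_of_lt hrN) j)) i := by
      simp [mul_apply, mulVec, dotProduct, hZ]
    rw [this, hYz]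
    simp [one_apply, Fin.val_eq_val]
  have hAHd : AH = Matrix.diagonal d := by
    rw [hAH, Matrix.mul_assoc, hAZ, ← Matrix.mul_assoc, hYZ, Matrix.one_mul]
  have hdne : ∀ i : Fin r, d i ≠ 0 := by
    intro i
    exact hne _ (by simpa using i.isLt)
  have hUnit : IsUnit AH := by
    rw [hAHd, Matrix.isUnit_iff_isUnit_det, det_diagonal, isUnit_iff_ne_zero]
    exact Finset.prod_ne_zero_iff.mpr fun i _ => hdne i
  have hAHinv : AH⁻¹ = Matrix.diagonal (fun i => (d i)⁻¹) := by
    apply Matrix.inv_eq_right_inv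
    have h1 : (fun i => d i * (d i)⁻¹) = fun _ : Fin r => (1:ℂ) := by
      funext i; exact mul_inv_cancel₀ (hdne i)
    rw [hAHd, diagonal_mul_diagonal, h1, Matrix.diagonal_one]
  -- action of E = Z·AH⁻¹·Yᴴ on eigenvectors
  have hElo : ∀ i : Fin N, (i:ℕ) < r →
      (Z * AH⁻¹ * Yᴴ) *ᵥ z i = (lam i)⁻¹ • z i := by
    intro i h
    set i' : Fin r := ⟨(i:ℕ), h⟩ with hi'
    have hcast : (Fin.castLE (le_of_lt hrN) i' : Fin N) = i := Fin.ext rfl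
    have hsingle : (fun a : Fin r => if (a:ℕ) = (i:ℕ) then (1:ℂ) else 0)
        = Pi.single i' 1 := by
      funext a
      rw [Pi.single_apply]
      simp [hi', Fin.ext_iff]
    rw [← Matrix.mulVec_mulVec, ← Matrix.mulVec_mulVec, hYz, hsingle, hAHinv,
      diagonal_mulVec_single, mul_one]
    funext k
    simp only [mulVec_single, Pi.smul_apply, smul_eq_mul]
    rw [show Z.col i' k = Z k i' from rfl, hZ, hcast, hd]
    simp [hcast, mul_comm]
  have hEhi : ∀ j : Fin N, r ≤ (j:ℕ) → (Z * AH⁻¹ * Yᴴ) *ᵥ z j = 0 := by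
    intro j h
    have h0 : Yᴴ *ᵥ z j = 0 := by
      rw [hYz]
      funext a
      have : (a:ℕ) ≠ (j:ℕ) := Nat.ne_of_lt (lt_of_lt_of_le a.isLt h)
      simp [this]
    rw [← Matrix.mulVec_mulVec, h0, Matrix.mulVec_zero]
  -- eigenvector relations for A·Q
  have hlo : ∀ i : Fin N, (i:ℕ) < r → (A * Q) *ᵥ z i = μ • z i := by
    intro i h
    have hQz : Q *ᵥ z i = (μ * (lam i)⁻¹) • z i := by
      rw [hQ, add_mulVec, sub_mulVec, one_mulVec, smul_mulVec,
        ← Matrix.mulVec_mulVec (N := A), heig,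
        mulVec_smul, hElo i h,
        smul_smul, smul_smul, mul_inv_cancel₀ (hne i h), one_smul, sub_self, zero_add]
    rw [← Matrix.mulVec_mulVec, hQz, mulVec_smul, heig, smul_smul,
      mul_assoc, inv_mul_cancel₀ (hne i h), mul_one]
  have hhi : ∀ j : Fin N, r ≤ (j:ℕ) → (A * Q) *ᵥ z j = lam j • z j := by
    intro j h
    have hQz : Q *ᵥ z j = z j := by
      rw [hQ, add_mulVec, sub_mulVec, one_mulVec, smul_mulVec,
        ← Matrix.mulVec_mulVec (N := A), heig,
        mulVec_smul, hEhi j h, smul_zero, smul_zero, sub_zero, add_zero]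
    rw [← Matrix.mulVec_mulVec, hQz, heig]
  refine ⟨hAHd, hUnit, hlo, hhi, ?_⟩
  -- spectrum
  set P : Matrix (Fin N) (Fin N) ℂ := Matrix.of fun k j => z j k with hP
  have hPcols : ∀ j, Pᵀ j = z j := fun j => rfl
  have hPunit : IsUnit P := by
    rw [← Matrix.linearIndependent_cols_iff_isUnit]
    exact hbasis
  set D : Matrix (Fin N) (Fin N) ℂ :=
    Matrix.diagonal (fun j : Fin N => if (j:ℕ) < r then μ else lam j) with hD
  have hconj : (A * Q) * P = P * D := by
    ext k j
    have hl : ((A * Q) * P) k j = ((A * Q) *ᵥ z j) k := by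
      simp [mul_apply, mulVec, dotProduct, hP]
    rw [hl, mul_diagonal]
    by_cases hj : (j:ℕ) < r
    · rw [hlo j hj]; simp [hj, hP, mul_comm]
    · rw [hhi j (le_of_not_gt hj)]; simp [hj, hP, mul_comm]
  obtain ⟨u, hu⟩ := hPunit
  have hdet : IsUnit P.det := (Matrix.isUnit_iff_isUnit_det P).mp ⟨u, hu⟩
  have hAQ : A * Q = P * D * P⁻¹ := by
    calc A * Q = (A * Q) * P * P⁻¹ := (Matrix.mul_nonsing_inv_cancel_right (A := P) (A * Q) hdet).symm
    _ = P * D * P⁻¹ := by rw [hconj]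
  have hspec : spectrum ℂ (A * Q) = spectrum ℂ D := by
    rw [hAQ, ← hu, ← Matrix.coe_units_inv]
    exact spectrum.units_conjugate
  rw [hspec, hD, spectrum_diagonal]
  ext x
  simp only [Set.mem_range, Set.mem_union, Set.mem_singleton_iff, Set.mem_setOf_eq]
  constructor
  · rintro ⟨j, rfl⟩
    by_cases hj : (j:ℕ) < r
    · left; simp [hj]
    · right; exact ⟨j, le_of_not_gt hj, by simp [hj]⟩
  · rintro (rfl | ⟨j, hj, rfl⟩)
    · exact ⟨⟨0, lt_of_lt_of_le hr1 hrN.le⟩, by simp [show (0:ℕ) < r from hr1]⟩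
    · exact ⟨j, by simp [Nat.not_lt.mpr hj]⟩
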